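/- Let (W,S) be a Coxeter system with Coxeter matrix m. Any word in the alphabet S can be transformed into any reduced word representing the same element of W by a finite sequence of moves of the following two forms: (a) deleting a subword of the form ss for some s ∈ S, and (b) replacing an alternating subword stst… of length m_{st} by the alternating subword tsts… of the same length m_{st} (for s,t ∈ S with m_{st} < ∞). -/

import Mathlib

/-- A single Tits move on words in the alphabet `B`: either (a) deleting a subword of the form
`ss`, or (b) replacing an alternating subword `stst…` of length `M s t < ∞` by the alternating
subword `tsts…` of the same length. (In a `CoxeterMatrix`, the entry `0` encodes `∞`.) -/
def TitsMove {B : Type*} (M : CoxeterMatrix B) (ω ω' : List B) : Prop :=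
  (∃ (l₁ l₂ : List B) (s : B), ω = l₁ ++ [s, s] ++ l₂ ∧ ω' = l₁ ++ l₂) ∨
  (∃ (l₁ l₂ : List B) (s t : B), s ≠ t ∧ M s t ≠ 0 ∧
    ω = l₁ ++ CoxeterSystem.alternatingWord s t (M s t) ++ l₂ ∧
    ω' = l₁ ++ CoxeterSystem.alternatingWord t s (M s t) ++ l₂)

open List

namespace TitsAux

section realmatrix



noncomputable def cheb (t : ℝ) : ℕ → ℝ
  | 0 => 0
  | 1 => 1
  | (n+2) => t * cheb t (n+1) - cheb t n

lemma cheb_sin (φ : ℝ) : ∀ k : ℕ, cheb (2 * Real.cos φ) k * Real.sin φ = Real.sin (k * φ)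
  | 0 => by simp [cheb]
  | 1 => by simp [cheb]
  | (n+2) => by
      have h1 := cheb_sin φ (n+1)
      have h2 := cheb_sin φ n
      have e1 : ((n:ℝ)+2) * φ = ((n:ℝ)+1) * φ + φ := by ring
      have e2 : (n:ℝ) * φ = ((n:ℝ)+1) * φ - φ := by ring
      push_cast at h1 h2 ⊢
      rw [e1, Real.sin_add]
      rw [e2, Real.sin_sub] at h2
      simp only [cheb]
      push_cast
      linear_combination (2 * Real.cos φ) * h1 - h2

noncomputable def Rm (κ : ℝ) : Matrix (Fin 2) (Fin 2) ℝ := !![-1, 2*κ; -2*κ, 4*κ^2-1]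

lemma Rm_sq (κ : ℝ) : Rm κ * Rm κ = (4*κ^2 - 2) • Rm κ - 1 := by
  ext i j
  fin_cases i <;> fin_cases j <;>
    simp [Rm, Matrix.mul_apply, Fin.sum_univ_two] <;> ring

lemma Rm_pow (κ : ℝ) : ∀ k : ℕ,
    Rm κ ^ (k+1) = cheb (4*κ^2-2) (k+1) • Rm κ - cheb (4*κ^2-2) k • (1 : Matrix (Fin 2) (Fin 2) ℝ)
  | 0 => by simp [cheb]
  | (k+1) => by
      have ih := Rm_pow κ k
      have hch : cheb (4*κ^2-2) (k+2) = (4*κ^2-2) * cheb (4*κ^2-2) (k+1) - cheb (4*κ^2-2) k :=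
        rfl
      rw [pow_succ, ih, sub_mul, Matrix.smul_mul, Matrix.smul_mul, one_mul, Rm_sq, hch]
      module

noncomputable def kap (m : ℕ) : ℝ := - Real.cos (Real.pi / m)

lemma kap_two : kap 2 = 0 := by simp [kap, Real.cos_pi_div_two]

lemma Rm_zero_sq : Rm 0 * Rm 0 = 1 := by
  ext i j
  fin_cases i <;> fin_cases j <;>
    simp [Rm, Matrix.mul_apply, Fin.sum_univ_two] <;> norm_num

section mge3

variable {m : ℕ}

lemma phi_pos (hm : 3 ≤ m) : 0 < 2 * Real.pi / m :=
  div_pos (by positivity) (by exact_mod_cast by omega)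

lemma phi_lt_pi (hm : 3 ≤ m) : 2 * Real.pi / m < Real.pi := by
  rw [div_lt_iff₀ (by exact_mod_cast by omega : (0:ℝ) < m)]
  have : (3:ℝ) ≤ m := by exact_mod_cast hm
  nlinarith [Real.pi_pos]

lemma sin_phi_pos (hm : 3 ≤ m) : 0 < Real.sin (2 * Real.pi / m) :=
  Real.sin_pos_of_pos_of_lt_pi (phi_pos hm) (phi_lt_pi hm)

lemma cheb_kap_sin (hm : m ≠ 0) (k : ℕ) :
    cheb (4 * (kap m)^2 - 2) k * Real.sin (2 * Real.pi / m) = Real.sin (k * (2 * Real.pi / m)) := by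
  have ht : 4 * (kap m)^2 - 2 = 2 * Real.cos (2 * Real.pi / m) := by
    rw [show (2:ℝ) * Real.pi / m = 2 * (Real.pi / m) by ring, Real.cos_two_mul]
    simp [kap]; ring
  rw [ht]
  exact cheb_sin _ k

lemma cheb_kap_m (hm : 3 ≤ m) : cheb (4 * (kap m)^2 - 2) m = 0 := by
  have h := cheb_kap_sin (m := m) (by omega) m
  rw [show (m:ℝ) * (2 * Real.pi / m) = 2 * Real.pi by
    field_simp, Real.sin_two_pi] at h
  exact (mul_eq_zero.mp h).resolve_right (ne_of_gt (sin_phi_pos hm))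

lemma cheb_kap_m_sub_one (hm : 3 ≤ m) : cheb (4 * (kap m)^2 - 2) (m-1) = -1 := by
  have h := cheb_kap_sin (m := m) (by omega) (m-1)
  have hc : ((m-1 : ℕ):ℝ) = (m:ℝ) - 1 := by
    push_cast [Nat.cast_sub (by omega : 1 ≤ m)]; ring
  rw [hc, show ((m:ℝ) - 1) * (2 * Real.pi / m) = 2 * Real.pi - 2 * Real.pi / m by
      field_simp,
    Real.sin_sub, Real.sin_two_pi, Real.cos_two_pi] at h
  have h' : cheb (4 * (kap m)^2 - 2) (m-1) * Real.sin (2 * Real.pi / m)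
      = (-1) * Real.sin (2 * Real.pi / m) := by rw [h]; ring
  exact mul_right_cancel₀ (ne_of_gt (sin_phi_pos hm)) h'

end mge3

lemma Rm_pow_m {m : ℕ} (hm : 2 ≤ m) : Rm (kap m) ^ m = 1 := by
  rcases eq_or_lt_of_le hm with h2 | h3
  · rw [← h2, kap_two, pow_two]; exact Rm_zero_sq
  · have hm3 : 3 ≤ m := h3
    have hdecomp : m = (m - 1) + 1 := by omega
    rw [hdecomp, Rm_pow, ← hdecomp, cheb_kap_m hm3, cheb_kap_m_sub_one hm3]
    simp

lemma kap_pos_ne {m : ℕ} (hm : 3 ≤ m) : kap m ≠ 0 := by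
  have h : 0 < Real.cos (Real.pi / m) := by
    apply Real.cos_pos_of_mem_Ioo
    constructor
    · have : (0:ℝ) < Real.pi / m := div_pos Real.pi_pos (by exact_mod_cast by omega)
      linarith [Real.pi_pos]
    · calc Real.pi / m < Real.pi / 2 := by
            apply div_lt_div_of_pos_left Real.pi_pos (by norm_num)
            exact_mod_cast by omega
        _ ≤ Real.pi / 2 := le_refl _
  simp only [kap, neg_ne_zero]
  exact ne_of_gt h

lemma Rm_pow_ne_one {m : ℕ} (hm : 2 ≤ m) {d : ℕ} (hd1 : 1 ≤ d) (hdm : d < m) :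
    Rm (kap m) ^ d ≠ 1 := by
  rcases eq_or_lt_of_le hm with h2 | h3
  · -- m = 2, d = 1
    have hd : d = 1 := by omega
    subst hd
    rw [← h2, kap_two, pow_one]
    intro h
    have := congrFun (congrFun h 0) 0
    simp [Rm, Matrix.one_apply] at this
    norm_num at this
  · have hm3 : 3 ≤ m := h3
    intro h
    have hdecomp : d = (d - 1) + 1 := by omega
    rw [hdecomp, Rm_pow, ← hdecomp] at h
    have h01 := congrFun (congrFun h 0) 1
    have h00 := congrFun (congrFun h 0) 0
    simp [Rm, Matrix.sub_apply, Matrix.smul_apply, Matrix.one_apply, smul_eq_mul] at h01 h00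
    -- h01 should say cheb * (2 * kap m) = 0 (in some form)
    have hchd : cheb (4 * (kap m)^2 - 2) d = 0 := by
      rcases h01 with h' | h'
      · exact h'
      · exact absurd h' (kap_pos_ne hm3)
    have hsd : Real.sin (d * (2 * Real.pi / m)) = 0 := by
      rw [← cheb_kap_sin (by omega : m ≠ 0) d, hchd, zero_mul]
    have hm0 : (0:ℝ) < m := by exact_mod_cast by omega
    by_cases hd2 : 2 * d = m
    · -- dφ = π
      have hdφ : (d:ℝ) * (2 * Real.pi / m) = Real.pi := by
        have : (m:ℝ) = 2 * d := by exact_mod_cast hd2.symm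
        rw [this]
        have hd0 : (0:ℝ) < d := by exact_mod_cast hd1
        field_simp
      have hch1 : cheb (4 * (kap m)^2 - 2) (d-1) = -1 := by
        rw [hchd] at h00
        linarith
      have h' := cheb_kap_sin (m := m) (by omega) (d-1)
      have hc : ((d-1 : ℕ):ℝ) = (d:ℝ) - 1 := by
        push_cast [Nat.cast_sub (by omega : 1 ≤ d)]; ring
      rw [hch1, hc, sub_mul, one_mul, hdφ, Real.sin_sub] at h'
      rw [Real.sin_pi, Real.cos_pi] at h'
      have hsin := sin_phi_pos hm3
      nlinarith
    · -- sin(dφ) ≠ 0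
      have h0 : (0:ℝ) < d * (2 * Real.pi / m) :=
        mul_pos (by exact_mod_cast hd1) (phi_pos hm3)
      have h2π : (d:ℝ) * (2 * Real.pi / m) < 2 * Real.pi := by
        rw [mul_div_assoc', div_lt_iff₀ hm0]
        have : (d:ℝ) < m := by exact_mod_cast hdm
        nlinarith [Real.pi_pos]
      have hneπ : (d:ℝ) * (2 * Real.pi / m) ≠ Real.pi := by
        intro heq
        apply hd2
        have : (d:ℝ) * (2 * Real.pi) = Real.pi * m := by
          field_simp at heq
          linear_combination Real.pi * heq
        have : (2 * d : ℝ) = (m:ℝ) := by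
          have hpi := Real.pi_pos
          nlinarith
        exact_mod_cast this
      rcases lt_or_gt_of_ne hneπ with hlt | hgt
      · exact absurd hsd (ne_of_gt (Real.sin_pos_of_pos_of_lt_pi h0 hlt))
      · have hpos : 0 < Real.sin ((d:ℝ) * (2 * Real.pi / m) - Real.pi) :=
          Real.sin_pos_of_pos_of_lt_pi (by linarith) (by linarith [Real.pi_pos])
        rw [Real.sin_sub_pi] at hpos
        linarith [hsd.le, hsd.ge, hpos]


variable {B : Type*} (M : CoxeterMatrix B)

noncomputable def kk (x y : B) : ℝ := kap (M x y)

lemma kk_self (x : B) : kk M x x = 1 := by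
  simp [kk, kap, M.diagonal]

lemma kk_symm (y x : B) : kk M y x = kk M x y := by rw [kk, kk, M.symmetric]

lemma kk_infinite {x y : B} (h : M x y = 0) : kk M x y = -1 := by
  simp [kk, kap, h]

lemma kap_sq_lt_one {m : ℕ} (hm : 2 ≤ m) : (kap m)^2 < 1 := by
  have h1 : 0 < Real.pi / m := div_pos Real.pi_pos (by exact_mod_cast by omega)
  have h2 : Real.pi / m < Real.pi := by
    rw [div_lt_iff₀ (by exact_mod_cast by omega : (0:ℝ) < m)]
    have : (2:ℝ) ≤ m := by exact_mod_cast hm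
    nlinarith [Real.pi_pos]
  have hs := Real.sin_pos_of_pos_of_lt_pi h1 h2
  have := Real.sin_sq_add_cos_sq (Real.pi / m)
  have : (kap m)^2 = Real.cos (Real.pi / m)^2 := by simp [kap]
  nlinarith [Real.sin_sq_add_cos_sq (Real.pi / m)]

/-! the representation -/

noncomputable def inr (x : B) : (B →₀ ℝ) →ₗ[ℝ] ℝ :=
  Finsupp.linearCombination ℝ (fun y => kk M x y)

@[simp] lemma inr_single (x y : B) (r : ℝ) : inr M x (Finsupp.single y r) = r * kk M x y := by
  simp [inr, Finsupp.linearCombination_single, smul_eq_mul]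

noncomputable def sref (x : B) : Function.End (B →₀ ℝ) :=
  fun v => v - (2 * inr M x v) • Finsupp.single x 1

noncomputable def app (x y : B) (A : Matrix (Fin 2) (Fin 2) ℝ) : Function.End (B →₀ ℝ) :=
  fun v => v + (A 0 0 * inr M x v + A 0 1 * inr M y v) • Finsupp.single x 1
             + (A 1 0 * inr M x v + A 1 1 * inr M y v) • Finsupp.single y 1

noncomputable def gram (x y : B) : Matrix (Fin 2) (Fin 2) ℝ := !![1, kk M x y; kk M x y, 1]

noncomputable def B0 (x y : B) : Matrix (Fin 2) (Fin 2) ℝ := !![-2, 4 * kk M x y; 0, -2]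


@[simp] lemma gram_00 (x y : B) : gram M x y 0 0 = 1 := rfl
@[simp] lemma gram_01 (x y : B) : gram M x y 0 1 = kk M x y := rfl
@[simp] lemma gram_10 (x y : B) : gram M x y 1 0 = kk M x y := rfl
@[simp] lemma gram_11 (x y : B) : gram M x y 1 1 = 1 := rfl
@[simp] lemma B0_00 (x y : B) : B0 M x y 0 0 = -2 := rfl
@[simp] lemma B0_01 (x y : B) : B0 M x y 0 1 = 4 * kk M x y := rfl
@[simp] lemma B0_10 (x y : B) : B0 M x y 1 0 = 0 := rfl
@[simp] lemma B0_11 (x y : B) : B0 M x y 1 1 = -2 := rfl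

lemma sref_sref_self (x : B) : sref M x * sref M x = 1 := by
  funext v
  show sref M x (sref M x v) = v
  simp only [sref, map_sub, map_smul, inr_single, smul_eq_mul, kk_self, mul_one]
  module

lemma sref_mul (x y : B) (v : B →₀ ℝ) :
    (sref M x * sref M y) v = app M x y (B0 M x y) v := by
  show sref M x (sref M y v) = _
  simp only [sref, app, map_sub, map_smul, inr_single, smul_eq_mul, kk_self, mul_one,
    kk_symm M y x, B0_00, B0_01, B0_10, B0_11]
  module

lemma app_app (x y : B) (A A' : Matrix (Fin 2) (Fin 2) ℝ) (v : B →₀ ℝ) :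
    app M x y A (app M x y A' v) = app M x y (A' + A + A * gram M x y * A') v := by
  simp only [app, map_add, map_smul, inr_single, smul_eq_mul, kk_self, mul_one,
    kk_symm M y x, Matrix.add_apply, Matrix.mul_apply, Fin.sum_univ_two,
    gram_00, gram_01, gram_10, gram_11]
  module

lemma one_add_gram_B0 (x y : B) : 1 + gram M x y * B0 M x y = Rm (kk M x y) := by
  ext i j
  fin_cases i <;> fin_cases j <;>
    simp [gram, B0, Rm, Matrix.mul_apply, Fin.sum_univ_two, Matrix.one_apply] <;> ring

lemma pow_app (x y : B) : ∀ k : ℕ, ∃ A : Matrix (Fin 2) (Fin 2) ℝ,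
    (∀ v, ((sref M x * sref M y)^(k+1)) v = app M x y A v) ∧
    1 + gram M x y * A = Rm (kk M x y) ^ (k+1)
  | 0 => by
      refine ⟨B0 M x y, fun v => ?_, by rw [pow_one]; exact one_add_gram_B0 M x y⟩
      rw [pow_one]; exact sref_mul M x y v
  | (k+1) => by
      obtain ⟨A, hA, hA2⟩ := pow_app x y k
      refine ⟨B0 M x y + A + A * gram M x y * B0 M x y, fun v => ?_, ?_⟩
      · rw [pow_succ]
        show ((sref M x * sref M y)^(k+1)) ((sref M x * sref M y) v) = _
        rw [sref_mul M x y v, hA, app_app]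
      · calc 1 + gram M x y * (B0 M x y + A + A * gram M x y * B0 M x y)
            = (1 + gram M x y * A) * (1 + gram M x y * B0 M x y) := by noncomm_ring
          _ = Rm (kk M x y) ^ (k+1) * Rm (kk M x y) := by
              rw [hA2, one_add_gram_B0]
          _ = Rm (kk M x y) ^ (k+2) := by rw [← pow_succ]

lemma gram_isUnit {x y : B} (hxy : x ≠ y) (h0 : M x y ≠ 0) : IsUnit (gram M x y) := by
  apply (Matrix.isUnit_iff_isUnit_det _).mpr
  have h2 : 2 ≤ M x y := by have := M.off_diagonal x y hxy; omega
  have := kap_sq_lt_one h2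
  rw [Matrix.det_fin_two]
  simp only [gram_00, gram_01, gram_10, gram_11]
  rw [isUnit_iff_ne_zero]
  have : kk M x y ^ 2 < 1 := this
  nlinarith

lemma liftable : M.IsLiftable (fun x => sref M x) := by
  intro x y
  rcases eq_or_ne x y with rfl | hxy
  · rw [M.diagonal x, pow_one]
    exact sref_sref_self M x
  · rcases eq_or_ne (M x y) 0 with h0 | h0
    · rw [h0, pow_zero]
    · have h2 : 2 ≤ M x y := by have := M.off_diagonal x y hxy; omega
      obtain ⟨A, hA, hA2⟩ := pow_app M x y (M x y - 1)
      have hm : M x y - 1 + 1 = M x y := by omega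
      rw [hm] at hA hA2
      have hR : Rm (kk M x y) ^ (M x y) = 1 := Rm_pow_m h2
      rw [hR] at hA2
      have hGA : gram M x y * A = 0 := by
        have : gram M x y * A = (1 + gram M x y * A) - 1 := by noncomm_ring
        rw [this, hA2, sub_self]
      have hAz : A = 0 := by
        obtain ⟨u, hu⟩ := gram_isUnit M hxy h0
        have h1 : (↑u⁻¹ : Matrix (Fin 2) (Fin 2) ℝ) * ((u : Matrix (Fin 2) (Fin 2) ℝ) * A) = 0 := by
          rw [hu, hGA, Matrix.mul_zero]
        rwa [← Matrix.mul_assoc, Units.inv_mul, Matrix.one_mul] at h1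
      funext v
      rw [hA v, hAz]
      show v + _ + _ = v
      simp



section rep
variable {W : Type*} [Group W] (cs : CoxeterSystem M W)

noncomputable def grep : W →* Function.End (B →₀ ℝ) := cs.lift ⟨fun x => sref M x, liftable M⟩

lemma grep_simple (x : B) : grep M cs (cs.simple x) = sref M x :=
  cs.lift_apply_simple (liftable M) x

lemma sref_pow_infinite {x y : B} (hxy : x ≠ y) (h0 : M x y = 0) : ∀ d : ℕ,
    ((sref M x * sref M y)^d) (Finsupp.single x 1)
      = (1 + 2*(d:ℝ)) • Finsupp.single x (1:ℝ) + (2*(d:ℝ)) • Finsupp.single y 1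
  | 0 => by
      rw [pow_zero]
      show Finsupp.single x 1 = _
      push_cast
      module
  | (d+1) => by
      have ih := sref_pow_infinite hxy h0 d
      have hk : kk M x y = -1 := kk_infinite M h0
      have hk' : kk M y x = -1 := by rw [kk_symm M y x]; exact hk
      rw [pow_succ']
      show (sref M x * sref M y) (((sref M x * sref M y)^d) (Finsupp.single x 1)) = _
      rw [ih]
      show sref M x (sref M y _) = _
      simp only [sref, map_sub, map_add, map_smul, inr_single, smul_eq_mul, kk_self, mul_one,
        hk, hk']
      push_cast
      module

theorem simple_pow_ne_one {x y : B} (hxy : x ≠ y) {d : ℕ} (hd : d ≠ 0)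
    (hcond : M x y = 0 ∨ d < M x y) : (cs.simple x * cs.simple y)^d ≠ 1 := by
  intro h
  have hh : ((sref M x * sref M y)^d : Function.End (B →₀ ℝ)) = 1 := by
    have h' := congrArg (grep M cs) h
    rwa [map_pow, map_mul, grep_simple, grep_simple, map_one] at h'
  have ext2 : ∀ (c1 c2 : ℝ), c1 • Finsupp.single x (1:ℝ) + c2 • Finsupp.single y 1 = 0 →
      c1 = 0 ∧ c2 = 0 := by
    intro c1 c2 hc
    constructor
    · have := congrArg (fun f : B →₀ ℝ => f x) hc
      simpa [Finsupp.single_apply, hxy, (Ne.symm hxy)] using this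
    · have := congrArg (fun f : B →₀ ℝ => f y) hc
      simpa [Finsupp.single_apply, hxy, (Ne.symm hxy)] using this
  rcases hcond with h0 | hlt
  · have h1 : ((sref M x * sref M y)^d) (Finsupp.single x 1) = Finsupp.single x 1 :=
      congrFun hh (Finsupp.single x 1)
    rw [sref_pow_infinite M hxy h0 d] at h1
    have h2 := congrArg (fun f : B →₀ ℝ => f y) h1
    simp [Finsupp.single_apply, hxy, Ne.symm hxy] at h2
    exact hd h2
  · have hm2 : 2 ≤ M x y := by have := M.off_diagonal x y hxy; omega
    obtain ⟨A, hA, hA2⟩ := pow_app M x y (d-1)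
    have hdd : d - 1 + 1 = d := by omega
    rw [hdd] at hA hA2
    have hid : ∀ v, app M x y A v = v := by
      intro v
      rw [← hA v, hh]
      rfl
    have e1 := hid (Finsupp.single x 1)
    have e2 := hid (Finsupp.single y 1)
    simp only [app, inr_single, one_mul, kk_self, kk_symm M y x] at e1 e2
    rw [add_assoc, add_eq_left] at e1 e2
    obtain ⟨f1, f2⟩ := ext2 _ _ e1
    obtain ⟨f3, f4⟩ := ext2 _ _ e2
    have hAG : A * gram M x y = 0 := by
      have h00 : (A * gram M x y) 0 0 = 0 := by
        rw [Matrix.mul_apply, Fin.sum_univ_two, gram_00, gram_10]; simpa using f1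
      have h01 : (A * gram M x y) 0 1 = 0 := by
        rw [Matrix.mul_apply, Fin.sum_univ_two, gram_01, gram_11]; simpa using f3
      have h10 : (A * gram M x y) 1 0 = 0 := by
        rw [Matrix.mul_apply, Fin.sum_univ_two, gram_00, gram_10]; simpa using f2
      have h11 : (A * gram M x y) 1 1 = 0 := by
        rw [Matrix.mul_apply, Fin.sum_univ_two, gram_01, gram_11]; simpa using f4
      apply Matrix.ext
      intro i j
      rw [Matrix.zero_apply]
      fin_cases i <;> fin_cases j <;> assumption
    have hsub : Rm (kk M x y) ^ d - 1 = gram M x y * A := by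
      rw [← hA2]; noncomm_ring
    have hzero : (Rm (kk M x y) ^ d - 1) * gram M x y = 0 := by
      rw [hsub, Matrix.mul_assoc, hAG, Matrix.mul_zero]
    obtain ⟨u, hu⟩ := gram_isUnit M hxy (by omega)
    have hone : Rm (kk M x y) ^ d - 1 = 0 := by
      have h3 : (Rm (kk M x y) ^ d - 1) * (gram M x y * (↑u⁻¹ : Matrix (Fin 2) (Fin 2) ℝ)) = 0 := by
        rw [← Matrix.mul_assoc, hzero, Matrix.zero_mul]
      rwa [← hu, Units.mul_inv, Matrix.mul_one] at h3
    exact Rm_pow_ne_one hm2 (by omega) hlt (sub_eq_zero.mp hone)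

end rep



end realmatrix

section parity
open CoxeterSystem
open scoped Classical

variable {B W : Type*} [Group W] {M : CoxeterMatrix B} (cs : CoxeterSystem M W)

local prefix:100 "s" => cs.simple
local prefix:100 "π" => cs.wordProd
local prefix:100 "ℓ" => cs.length

noncomputable def fE (i : B) : Function.End (W × ℤˣ) :=
  fun p => (s i * p.1 * s i, if p.1 = s i then -p.2 else p.2)

noncomputable def sgn (ω : List B) (t : W) : ℤˣ :=
  ((cs.rightInvSeq ω).map (fun r => if r = t then (-1 : ℤˣ) else 1)).prod

lemma simple_conj_cancel (i : B) (w : W) : s i * (s i * w * s i) * s i = w := by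
  simp [mul_assoc, cs.simple_mul_simple_self, cs.simple_mul_simple_cancel_left]

lemma conj_eq_simple_iff (i : B) (w : W) : s i * w * s i = s i ↔ w = s i := by
  constructor
  · intro h
    have := congrArg (fun u => s i * u * s i) h
    rw [simple_conj_cancel] at this
    rw [this]
    simp [mul_assoc, cs.simple_mul_simple_self]
  · rintro rfl
    simp [mul_assoc, cs.simple_mul_simple_self]

lemma fE_sq (i : B) : fE cs i * fE cs i = 1 := by
  funext p
  show fE cs i (fE cs i p) = p
  unfold fE
  simp only
  rw [simple_conj_cancel]
  rcases p with ⟨w, e⟩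
  simp only
  by_cases h : w = s i
  · rw [if_pos ((conj_eq_simple_iff cs i w).mpr h), if_pos h, neg_neg]
  · rw [if_neg (fun hc => h ((conj_eq_simple_iff cs i w).mp hc)), if_neg h]

lemma ris_cons (i : B) (ω : List B) :
    cs.rightInvSeq (i :: ω) = ((π ω)⁻¹ * s i * π ω) :: cs.rightInvSeq ω := rfl

lemma sgn_cons (i : B) (ω : List B) (t : W) :
    sgn cs (i :: ω) t =
      (if (π ω)⁻¹ * s i * π ω = t then (-1:ℤˣ) else 1) * sgn cs ω t := by
  unfold sgn
  rw [ris_cons, map_cons, prod_cons]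

lemma fE_word_prod (ω : List B) : ∀ p : W × ℤˣ,
    ((ω.map (fE cs)).prod) p = (π ω * p.1 * (π ω)⁻¹, sgn cs ω p.1 * p.2) := by
  induction ω with
  | nil =>
      intro p
      show p = _
      simp [sgn, cs.wordProd_nil]
  | cons i ω ih =>
      intro p
      rw [map_cons, prod_cons]
      show fE cs i (((ω.map (fE cs)).prod) p) = _
      rw [ih p]
      unfold fE
      simp only
      rw [sgn_cons]
      have hcond : (π ω * p.1 * (π ω)⁻¹ = s i) ↔ ((π ω)⁻¹ * s i * π ω = p.1) := by
        constructor
        · intro h; rw [← h]; group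
        · intro h; rw [← h]; group
      simp only [Prod.mk.injEq]
      constructor
      · rw [cs.wordProd_cons, mul_inv_rev, cs.inv_simple]
        group
      · by_cases hc : π ω * p.1 * (π ω)⁻¹ = s i
        · rw [if_pos hc, if_pos (hcond.mp hc)]
          simp [neg_mul]
        · rw [if_neg hc, if_neg (fun h => hc (hcond.mpr h)), one_mul]

lemma alt_cons_cons (i j : B) (m : ℕ) :
    alternatingWord i j (2*m+2) = i :: j :: alternatingWord i j (2*m) := by
  rw [alternatingWord_succ' i j (2*m+1), alternatingWord_succ' i j (2*m)]
  have h1 : ¬ Even (2*m+1) := by simp [Nat.even_add_one, parity_simps]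
  have h2 : Even (2*m) := by simp [parity_simps]
  rw [if_neg h1, if_pos h2]

lemma fE_pow_alt (i j : B) : ∀ m : ℕ,
    (fE cs i * fE cs j)^m = ((alternatingWord i j (2*m)).map (fE cs)).prod
  | 0 => by simp [alternatingWord]
  | (m+1) => by
      rw [pow_succ', fE_pow_alt i j m, show 2*(m+1) = 2*m+2 by ring, alt_cons_cons,
        map_cons, map_cons, prod_cons, prod_cons, mul_assoc]

lemma prod_alt_concat (i j : B) (K : ℕ) :
    π (alternatingWord i j (K+1)) = π (alternatingWord j i K) * s j := by
  rw [alternatingWord_succ, cs.wordProd_concat]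

lemma semiconjp (a b : W) (K : ℕ) : a * (b * a)^K = (a * b)^K * a := by
  have h : SemiconjBy a (b * a) (a * b) := by
    unfold SemiconjBy
    rw [mul_assoc]
  exact (h.pow_right K).eq

lemma alt_inv_mul (i j : B) : ∀ K : ℕ,
    (π (alternatingWord i j K))⁻¹ * π (alternatingWord j i K) = (s j * s i)^K
  | 0 => by simp [alternatingWord]
  | (K+1) => by
      rw [prod_alt_concat cs i j, prod_alt_concat cs j i, mul_inv_rev, cs.inv_simple]
      calc s j * (π (alternatingWord j i K))⁻¹ * (π (alternatingWord i j K) * s i)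
          = s j * ((π (alternatingWord j i K))⁻¹ * π (alternatingWord i j K)) * s i := by
            group
        _ = s j * (s i * s j)^K * s i := by rw [alt_inv_mul j i K]
        _ = ((s j * s i)^K * s j) * s i := by rw [semiconjp]
        _ = (s j * s i)^K * (s j * s i) := by rw [mul_assoc]
        _ = (s j * s i)^(K+1) := by rw [pow_succ]

lemma alt_inv_mul_succ (i j : B) (K : ℕ) :
    (π (alternatingWord i j K))⁻¹ * π (alternatingWord i j (K+1)) = (s j * s i)^K * s j := by
  rw [prod_alt_concat, ← mul_assoc, alt_inv_mul]

lemma ris_alt (i j : B) : ∀ K : ℕ, cs.rightInvSeq (alternatingWord i j K)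
    = (range K).map (fun p => (s j * s i)^(K - 1 - p) * s j)
  | 0 => by simp [alternatingWord]
  | (K+1) => by
      rw [alternatingWord_succ' i j K, ris_cons, ris_alt i j K, range_succ_eq_map, map_cons]
      congr 1
      · have h1 : π (alternatingWord i j (K+1))
            = s (if Even K then j else i) * π (alternatingWord i j K) := by
          rw [alternatingWord_succ' i j K, cs.wordProd_cons]
        have h2 := alt_inv_mul_succ cs i j K
        rw [h1] at h2
        rw [show K + 1 - 1 - 0 = K by omega, ← h2]
        group
      · rw [map_map]
        apply map_congr_left
        intro q hq
        simp only [Function.comp_apply]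
        congr 2
        omega

lemma sgn_alt_one (i j : B) (t : W) : sgn cs (alternatingWord i j (2 * M i j)) t = 1 := by
  unfold sgn
  rw [ris_alt]
  have hpow : (cs.simple j * cs.simple i) ^ (M i j) = 1 := cs.simple_mul_simple_pow' i j
  rw [show 2 * M i j = M i j + M i j by ring, range_add, map_append, map_append, prod_append]
  simp only [map_map]
  have hlists : ((range (M i j)).map
        ((fun r => if r = t then (-1:ℤˣ) else 1) ∘
          fun p => (cs.simple j * cs.simple i)^(M i j + M i j - 1 - p) * cs.simple j))
      = ((range (M i j)).map
        ((fun r => if r = t then (-1:ℤˣ) else 1) ∘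
          ((fun p => (cs.simple j * cs.simple i)^(M i j + M i j - 1 - p) * cs.simple j) ∘
            (fun x => M i j + x)))) := by
    apply map_congr_left
    intro q hq
    rw [mem_range] at hq
    simp only [Function.comp_apply]
    have e1 : M i j + M i j - 1 - q = (M i j + M i j - 1 - (M i j + q)) + M i j := by omega
    rw [e1, pow_add, hpow, mul_one]
  rw [hlists]
  exact Int.units_mul_self _

lemma fE_liftable : M.IsLiftable (fE cs) := by
  intro i j
  rcases eq_or_ne i j with rfl | hij
  · rw [M.diagonal i, pow_one]
    exact fE_sq cs i
  · rw [fE_pow_alt]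
    funext p
    rw [fE_word_prod]
    have hπ : π (alternatingWord i j (2 * M i j)) = 1 := by
      rw [cs.prod_alternatingWord_eq_mul_pow]
      rw [if_pos (by simp [parity_simps])]
      rw [show 2 * M i j / 2 = M i j by omega]
      rw [cs.simple_mul_simple_pow i j, one_mul]
    rw [hπ, sgn_alt_one]
    show _ = p
    simp

noncomputable def phiE : W →* Function.End (W × ℤˣ) := cs.lift ⟨fE cs, fE_liftable cs⟩

lemma phiE_wordProd (ω : List B) : phiE cs (π ω) = (ω.map (fE cs)).prod := by
  unfold CoxeterSystem.wordProd
  rw [map_list_prod, map_map]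
  congr 1
  apply map_congr_left
  intro i _
  exact cs.lift_apply_simple (fE_liftable cs) i

lemma sgn_invariant {ω₁ ω₂ : List B} (h : π ω₁ = π ω₂) (t : W) :
    sgn cs ω₁ t = sgn cs ω₂ t := by
  have h1 : ((ω₁.map (fE cs)).prod) (t, 1) = ((ω₂.map (fE cs)).prod) (t, 1) := by
    rw [← phiE_wordProd, ← phiE_wordProd, h]
  rw [fE_word_prod, fE_word_prod] at h1
  have := congrArg Prod.snd h1
  simpa using this

lemma sgn_eq_one_of_not_mem {ω : List B} {t : W} (h : t ∉ cs.rightInvSeq ω) :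
    sgn cs ω t = 1 := by
  apply List.prod_eq_one
  intro x hx
  rw [mem_map] at hx
  obtain ⟨r, hr, rfl⟩ := hx
  rw [if_neg]
  intro hc
  exact h (hc ▸ hr)

theorem mem_ris_of_isRightDescent {ω : List B} {i : B}
    (hdesc : cs.IsRightDescent (π ω) i) : s i ∈ cs.rightInvSeq ω := by
  obtain ⟨κ, hκred, hκ⟩ := cs.exists_reduced_word' ((π ω) * s i)
  have hlenκ : κ.length = ℓ (π ω * s i) := by rw [hκ]; exact hκred.symm
  have hnotmem : s i ∉ cs.rightInvSeq κ := by
    intro hmem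
    obtain ⟨q, hq, hget⟩ := List.mem_iff_getElem.mp hmem
    rw [cs.length_rightInvSeq] at hq
    have herase := cs.wordProd_mul_getD_rightInvSeq κ q
    rw [List.getD_eq_getElem _ 1 (by rw [cs.length_rightInvSeq]; exact hq), hget] at herase
    rw [← hκ] at herase
    have h1 : π ω * s i * s i = π ω := cs.simple_mul_simple_cancel_right i
    rw [h1] at herase
    have h2 : ℓ (π ω) ≤ (κ.eraseIdx q).length := herase ▸ cs.length_wordProd_le _
    rw [List.length_eraseIdx] at h2
    rw [if_pos hq] at h2
    have h3 := hdesc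
    unfold CoxeterSystem.IsRightDescent at h3
    omega
  have hprod : π (κ.concat i) = π ω := by
    rw [cs.wordProd_concat, ← hκ, cs.simple_mul_simple_cancel_right]
  have h1 : sgn cs (κ.concat i) (s i) = -1 := by
    unfold sgn
    rw [cs.rightInvSeq_concat, concat_eq_append, map_append, prod_append]
    have hfirst : ((cs.rightInvSeq κ).map (MulAut.conj (s i))).map
        (fun r => if r = s i then (-1:ℤˣ) else 1) = (cs.rightInvSeq κ).map (fun _ => 1) := by
      rw [map_map]
      apply map_congr_left
      intro r hr
      simp only [Function.comp_apply, MulAut.conj_apply, cs.inv_simple]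
      rw [if_neg]
      intro hc
      have hri : r = s i := (conj_eq_simple_iff cs i r).mp hc
      exact hnotmem (hri ▸ hr)
    rw [hfirst]
    simp
  have h2 : sgn cs ω (s i) = -1 := by
    rw [sgn_invariant cs hprod.symm (s i)]
    exact h1
  by_contra hnm
  rw [sgn_eq_one_of_not_mem cs hnm] at h2
  exact absurd h2 (by decide)

theorem left_exchange {ω : List B} {z : B} (hdesc : cs.IsLeftDescent (π ω) z) :
    s z ∈ cs.leftInvSeq ω := by
  have h1 : cs.IsRightDescent (π ω)⁻¹ z := cs.isRightDescent_inv_iff.mpr hdesc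
  have h2 : π (ω.reverse) = (π ω)⁻¹ := cs.wordProd_reverse ω
  have h3 : s z ∈ cs.rightInvSeq (ω.reverse) :=
    mem_ris_of_isRightDescent cs (by rw [h2]; exact h1)
  rw [cs.rightInvSeq_reverse] at h3
  rwa [mem_reverse] at h3

theorem left_exchange' {ω : List B} {z : B} (hdesc : cs.IsLeftDescent (π ω) z) :
    ∃ q, q < ω.length ∧ s z * π ω = π (ω.eraseIdx q) := by
  obtain ⟨q, hq, hget⟩ := List.mem_iff_getElem.mp (left_exchange cs hdesc)
  rw [cs.length_leftInvSeq] at hq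
  refine ⟨q, hq, ?_⟩
  have := cs.getD_leftInvSeq_mul_wordProd ω q
  rw [List.getD_eq_getElem _ 1 (by rw [cs.length_leftInvSeq]; exact hq), hget] at this
  exact this


/-! ### Braid moves -/

def BraidMove (M : CoxeterMatrix B) (ω ω' : List B) : Prop :=
  ∃ (l₁ l₂ : List B) (a b : B), a ≠ b ∧ M a b ≠ 0 ∧
    ω = l₁ ++ CoxeterSystem.alternatingWord a b (M a b) ++ l₂ ∧
    ω' = l₁ ++ CoxeterSystem.alternatingWord b a (M a b) ++ l₂

lemma braidMove_tits {ω ω' : List B} (h : BraidMove M ω ω') : TitsMove M ω ω' := Or.inr h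

lemma braidMove_symm {ω ω' : List B} (h : BraidMove M ω ω') : BraidMove M ω' ω := by
  obtain ⟨l₁, l₂, a, b, hab, h0, he1, he2⟩ := h
  refine ⟨l₁, l₂, b, a, hab.symm, by rwa [M.symmetric b a], ?_, ?_⟩
  · rwa [M.symmetric b a]
  · rwa [M.symmetric b a]

lemma braidMove_cons (c : B) {ω ω' : List B} (h : BraidMove M ω ω') :
    BraidMove M (c :: ω) (c :: ω') := by
  obtain ⟨l₁, l₂, a, b, hab, h0, he1, he2⟩ := h
  exact ⟨c :: l₁, l₂, a, b, hab, h0, by simp [he1], by simp [he2]⟩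

lemma titsMove_cons (c : B) {ω ω' : List B} (h : TitsMove M ω ω') :
    TitsMove M (c :: ω) (c :: ω') := by
  rcases h with ⟨l₁, l₂, a, he1, he2⟩ | h
  · exact Or.inl ⟨c :: l₁, l₂, a, by simp [he1], by simp [he2]⟩
  · exact Or.inr (braidMove_cons c h)

lemma braidMove_wordProd {ω ω' : List B} (h : BraidMove M ω ω') : π ω = π ω' := by
  obtain ⟨l₁, l₂, a, b, hab, h0, he1, he2⟩ := h
  subst he1 he2
  rw [cs.wordProd_append, cs.wordProd_append, cs.wordProd_append, cs.wordProd_append]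
  have hb := cs.wordProd_braidWord_eq a b
  unfold CoxeterSystem.braidWord at hb
  rw [M.symmetric b a] at hb
  rw [hb]

/-! ### Alternating words are reduced -/

theorem isReduced_alt : ∀ (K : ℕ) (i j : B), i ≠ j → (M i j = 0 ∨ K ≤ M i j) →
    cs.IsReduced (alternatingWord i j K) := by
  intro K
  induction K with
  | zero =>
      intro i j _ _
      simp [CoxeterSystem.IsReduced, alternatingWord]
  | succ K ih =>
      intro i j hij hcond
      have hcond' : M j i = 0 ∨ K ≤ M j i := by
        rw [M.symmetric j i]; rcases hcond with h | h; exacts [Or.inl h, Or.inr (by omega)]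
      have hred : cs.IsReduced (alternatingWord j i K) := ih j i hij.symm hcond'
      by_contra hnred
      have hlenK : ℓ (π (alternatingWord j i K)) = K := by
        rw [hred]; exact length_alternatingWord j i K
      have hconcat : alternatingWord i j (K+1) = (alternatingWord j i K).concat j :=
        alternatingWord_succ i j K
      have hπ : π (alternatingWord i j (K+1)) = π (alternatingWord j i K) * s j := by
        rw [hconcat, cs.wordProd_concat]
      have hlt : ℓ (π (alternatingWord i j (K+1))) < K + 1 := by
        rcases lt_or_eq_of_le ((cs.length_wordProd_le (alternatingWord i j (K+1))).trans_eq
          (length_alternatingWord i j (K+1))) with h | h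
        · exact h
        · exact absurd (h.trans (length_alternatingWord i j (K+1)).symm) hnred
      have hdesc : cs.IsRightDescent (π (alternatingWord j i K)) j := by
        unfold CoxeterSystem.IsRightDescent
        rw [← hπ, hlenK]
        rcases cs.length_mul_simple (π (alternatingWord j i K)) j with h | h
        · rw [← hπ] at h; omega
        · rw [← hπ] at h; omega
      have hmem := mem_ris_of_isRightDescent cs hdesc
      rw [ris_alt cs j i K] at hmem
      obtain ⟨p, hp, heq⟩ := mem_map.mp hmem
      rw [mem_range] at hp
      -- heq : (s i * s j)^(K - 1 - p) * s i = s j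
      have hpow1 : (s i * s j)^(K - 1 - p + 1) = 1 := by
        rw [pow_succ, ← mul_assoc]
        have h1 : (s i * s j)^(K - 1 - p) = s j * s i := by
          have := congrArg (fun u => u * s i) heq
          rwa [mul_assoc, cs.simple_mul_simple_self, mul_one] at this
        rw [mul_assoc, h1]
        calc s j * s i * (s i * s j) = s j * (s i * s i) * s j := by group
          _ = 1 := by rw [cs.simple_mul_simple_self, mul_one, cs.simple_mul_simple_self]
      have hcond2 : M i j = 0 ∨ K - 1 - p + 1 < M i j := by
        rcases hcond with h | h
        · exact Or.inl h
        · exact Or.inr (by omega)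
      exact simple_pow_ne_one M cs hij (by omega) hcond2 hpow1

/-! ### Both-descents lemma -/

theorem braid_prefix {w : W} {i j : B} (hij : i ≠ j)
    (hi : cs.IsLeftDescent w i) (hj : cs.IsLeftDescent w j) :
    M i j ≠ 0 ∧ ∃ γ, cs.IsReduced (alternatingWord i j (M i j) ++ γ) ∧
      w = π (alternatingWord i j (M i j) ++ γ) := by
  have step : ∀ (k : ℕ) (γ : List B), (M i j = 0 ∨ k + 1 ≤ M i j) →
      cs.IsReduced (alternatingWord i j k ++ γ) → w = π (alternatingWord i j k ++ γ) →
      ∃ γ', cs.IsReduced (alternatingWord i j (k+1) ++ γ') ∧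
        w = π (alternatingWord i j (k+1) ++ γ') := by
    intro k γ hcond hred hw
    have hzd : cs.IsLeftDescent w (if Even k then j else i) := by
      split_ifs; exacts [hj, hi]
    rw [hw] at hzd
    obtain ⟨q, hq, herase⟩ := left_exchange' cs hzd
    have hlenalt : (alternatingWord i j k).length = k := length_alternatingWord i j k
    have hcons : alternatingWord i j (k+1)
        = (if Even k then j else i) :: alternatingWord i j k := alternatingWord_succ' i j k
    have hπcons : π (alternatingWord i j (k+1))
        = s (if Even k then j else i) * π (alternatingWord i j k) := by
      rw [hcons, cs.wordProd_cons]
    by_cases hqk : q < k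
    · exfalso
      rw [List.eraseIdx_append_of_lt_length (by rw [hlenalt]; exact hqk) γ] at herase
      rw [cs.wordProd_append, cs.wordProd_append, ← mul_assoc] at herase
      have hcancel := mul_right_cancel herase
      have hlen1 : ℓ (s (if Even k then j else i) * π (alternatingWord i j k)) ≤ k - 1 := by
        rw [hcancel]
        calc ℓ (π ((alternatingWord i j k).eraseIdx q)) ≤ _ := cs.length_wordProd_le _
          _ ≤ k - 1 := by
              rw [List.length_eraseIdx, if_pos (by rw [hlenalt]; exact hqk), hlenalt]
      have hlen2 : ℓ (π (alternatingWord i j (k+1))) = k + 1 := by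
        rw [isReduced_alt cs (k+1) i j hij hcond]
        exact length_alternatingWord i j (k+1)
      rw [← hπcons, hlen2] at hlen1
      omega
    · push_neg at hqk
      rw [List.eraseIdx_append_of_length_le (by rw [hlenalt]; exact hqk) γ] at herase
      rw [hlenalt] at herase
      set γ' := γ.eraseIdx (q - k) with hγ'
      have hw' : w = π (alternatingWord i j (k+1) ++ γ') := by
        have h1 : s (if Even k then j else i) * (s (if Even k then j else i) * w) = w :=
          cs.simple_mul_simple_cancel_left _
        have h2 : s (if Even k then j else i) * w = π (alternatingWord i j k ++ γ') := by
          rw [hw]; exact herase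
        rw [← h1, h2, ← cs.wordProd_cons]
        congr 1
        rw [hcons]
        simp
      have hlγ : q - k < γ.length := by
        rw [length_append, hlenalt] at hq
        omega
      have hlw : ℓ w = k + γ.length := by
        have h2 : ℓ (π (alternatingWord i j k ++ γ)) = (alternatingWord i j k ++ γ).length := hred
        rw [← hw, length_append, hlenalt] at h2
        exact h2
      have hlγ' : γ'.length = γ.length - 1 := by
        rw [hγ', List.length_eraseIdx, if_pos hlγ]
      refine ⟨γ', ?_, hw'⟩
      show ℓ (π (alternatingWord i j (k+1) ++ γ')) = _
      rw [← hw', length_append, length_alternatingWord, hlγ', hlw]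
      omega
  have main : ∀ k : ℕ, (M i j = 0 ∨ k ≤ M i j) →
      ∃ γ, cs.IsReduced (alternatingWord i j k ++ γ) ∧ w = π (alternatingWord i j k ++ γ) := by
    intro k
    induction k with
    | zero =>
        intro _
        obtain ⟨ω₀, h1, h2⟩ := cs.exists_reduced_word' w
        exact ⟨ω₀, by simpa [alternatingWord] using h1, by simpa [alternatingWord] using h2⟩
    | succ k ihk =>
        intro hcond
        have hcond' : M i j = 0 ∨ k ≤ M i j := by
          rcases hcond with h | h; exacts [Or.inl h, Or.inr (by omega)]
        obtain ⟨γ, h1, h2⟩ := ihk hcond'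
        exact step k γ hcond h1 h2
  have hM0 : M i j ≠ 0 := by
    intro h0
    obtain ⟨γ, h1, h2⟩ := main (ℓ w + 1) (Or.inl h0)
    have h3 : ℓ (π (alternatingWord i j (ℓ w + 1) ++ γ))
        = (alternatingWord i j (ℓ w + 1) ++ γ).length := h1
    rw [← h2, length_append, length_alternatingWord] at h3
    omega
  exact ⟨hM0, main (M i j) (Or.inr le_rfl)⟩

/-! ### Matsumoto's theorem -/

theorem matsumoto : ∀ (n : ℕ) (ω₁ ω₂ : List B), ω₁.length = n → cs.IsReduced ω₁ →
    cs.IsReduced ω₂ → π ω₁ = π ω₂ → Relation.ReflTransGen (BraidMove M) ω₁ ω₂ := by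
  intro n
  induction n using Nat.strong_induction_on with
  | _ n IH =>
    intro ω₁ ω₂ hlen h1 h2 hprod
    have hlen2 : ω₂.length = n := by
      have e1 : ℓ (π ω₂) = ω₂.length := h2
      rw [← hprod] at e1
      rw [← e1, h1, hlen]
    match n, hlen, hlen2 with
    | 0, hlen, hlen2 =>
        rw [List.length_eq_zero_iff] at hlen hlen2
        subst hlen; subst hlen2
        exact Relation.ReflTransGen.refl
    | (m+1), hlen, hlen2 =>
      have hcons : ∀ (c : B) (α' β' : List B), α'.length = m →
          cs.IsReduced (c :: α') → cs.IsReduced (c :: β') → π (c :: α') = π (c :: β') →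
          Relation.ReflTransGen (BraidMove M) (c :: α') (c :: β') := by
        intro c α' β' hlen' hr1 hr2 hpr
        have htail : π α' = π β' := by
          rw [cs.wordProd_cons, cs.wordProd_cons] at hpr
          exact mul_left_cancel hpr
        have hr1' : cs.IsReduced α' := by
          have := CoxeterSystem.IsReduced.drop (j := 1) hr1
          simpa using this
        have hr2' : cs.IsReduced β' := by
          have := CoxeterSystem.IsReduced.drop (j := 1) hr2
          simpa using this
        have hrec := IH m (by omega) α' β' hlen' hr1' hr2' htail
        exact Relation.ReflTransGen.lift (fun l => c :: l)
          (fun a b hab => braidMove_cons c hab) _ _ hrec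
      obtain ⟨a, α, rfl⟩ : ∃ a α, ω₁ = a :: α := by
        rcases ω₁ with _ | ⟨a, α⟩
        · simp at hlen
        · exact ⟨a, α, rfl⟩
      obtain ⟨b, β, rfl⟩ : ∃ b β, ω₂ = b :: β := by
        rcases ω₂ with _ | ⟨b, β⟩
        · simp at hlen2
        · exact ⟨b, β, rfl⟩
      have hlenα : α.length = m := by simpa using hlen
      have hlenβ : β.length = m := by simpa using hlen2
      rcases eq_or_ne a b with rfl | hab
      · exact hcons a α β hlenα h1 h2 hprod
      · -- both a and b are left descents of w := π (a :: α)
        have hwa : s a * π (a :: α) = π α := by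
          rw [cs.wordProd_cons, cs.simple_mul_simple_cancel_left]
        have hwb : s b * π (a :: α) = π β := by
          rw [hprod, cs.wordProd_cons, cs.simple_mul_simple_cancel_left]
        have hlw : ℓ (π (a :: α)) = m + 1 := by
          rw [h1]; simpa using hlen
        have hia : cs.IsLeftDescent (π (a :: α)) a := by
          unfold CoxeterSystem.IsLeftDescent
          rw [hwa, hlw]
          calc ℓ (π α) ≤ α.length := cs.length_wordProd_le α
            _ < m + 1 := by omega
        have hib : cs.IsLeftDescent (π (a :: α)) b := by
          unfold CoxeterSystem.IsLeftDescent
          rw [hwb, hlw]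
          calc ℓ (π β) ≤ β.length := cs.length_wordProd_le β
            _ < m + 1 := by omega
        obtain ⟨hM0, γ, hredσ, hwσ⟩ := braid_prefix cs hab hia hib
        set mm := M a b with hmm
        have hm2 : 2 ≤ mm := by
          have := M.off_diagonal a b hab
          omega
        have hπσ' : π (alternatingWord b a mm ++ γ) = π (a :: α) := by
          have hb := cs.wordProd_braidWord_eq a b
          unfold CoxeterSystem.braidWord at hb
          rw [M.symmetric b a] at hb
          rw [cs.wordProd_append, ← hb, ← cs.wordProd_append, ← hwσ]
        have hlenσ : (alternatingWord a b mm ++ γ).length = m + 1 := by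
          have : ℓ (π (a :: α)) = (alternatingWord a b mm ++ γ).length := by
            rw [hwσ]; exact hredσ
          omega
        have hlenσ' : (alternatingWord b a mm ++ γ).length = m + 1 := by
          rw [length_append, length_alternatingWord] at hlenσ ⊢
          exact hlenσ
        have hredσ' : cs.IsReduced (alternatingWord b a mm ++ γ) := by
          show ℓ _ = _
          rw [hπσ', hlw, hlenσ']
        have hbm : BraidMove M (alternatingWord a b mm ++ γ) (alternatingWord b a mm ++ γ) :=
          ⟨[], γ, a, b, hab, hM0, by simp [hmm], by simp [hmm]⟩
        have hmm1 : mm = (mm - 1) + 1 := by omega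
        have hdecompσ : alternatingWord a b mm ++ γ
            = (if Even (mm-1) then b else a) :: (alternatingWord a b (mm-1) ++ γ) := by
          conv_lhs => rw [hmm1, alternatingWord_succ' a b (mm-1)]
          simp
        have hdecompσ' : alternatingWord b a mm ++ γ
            = (if Even (mm-1) then a else b) :: (alternatingWord b a (mm-1) ++ γ) := by
          conv_lhs => rw [hmm1, alternatingWord_succ' b a (mm-1)]
          simp
        have hlent : (alternatingWord a b (mm-1) ++ γ).length = m := by
          rw [length_append, length_alternatingWord]
          rw [length_append, length_alternatingWord] at hlenσ
          omega
        have hlent' : (alternatingWord b a (mm-1) ++ γ).length = m := by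
          rw [length_append, length_alternatingWord]
          rw [length_append, length_alternatingWord] at hlenσ'
          omega
        rcases Nat.even_or_odd (mm - 1) with he | ho
        · -- σ starts with b, σ' starts with a
          rw [if_pos he] at hdecompσ
          rw [if_pos he] at hdecompσ'
          have c1 : Relation.ReflTransGen (BraidMove M) (a :: α)
              (alternatingWord b a mm ++ γ) := by
            rw [hdecompσ']
            exact hcons a α _ hlenα h1 (hdecompσ' ▸ hredσ') (by rw [← hdecompσ', hπσ'])
          have c2 : Relation.ReflTransGen (BraidMove M) (alternatingWord a b mm ++ γ)
              (b :: β) := by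
            rw [hdecompσ]
            refine hcons b _ β hlent (hdecompσ ▸ hredσ) h2 ?_
            rw [← hdecompσ, ← hwσ, hprod]
          exact (c1.trans (Relation.ReflTransGen.single (braidMove_symm hbm))).trans c2
        · rw [if_neg (Nat.not_even_iff_odd.mpr ho)] at hdecompσ
          rw [if_neg (Nat.not_even_iff_odd.mpr ho)] at hdecompσ'
          have c1 : Relation.ReflTransGen (BraidMove M) (a :: α)
              (alternatingWord a b mm ++ γ) := by
            rw [hdecompσ]
            exact hcons a α _ hlenα h1 (hdecompσ ▸ hredσ) (by rw [← hdecompσ, ← hwσ])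
          have c2 : Relation.ReflTransGen (BraidMove M) (alternatingWord b a mm ++ γ)
              (b :: β) := by
            rw [hdecompσ']
            refine hcons b _ β hlent' (hdecompσ' ▸ hredσ') h2 ?_
            rw [← hdecompσ', hπσ', hprod]
          exact (c1.trans (Relation.ReflTransGen.single hbm)).trans c2

/-! ### Reduction of non-reduced words -/

theorem reduce_nonreduced : ∀ ω : List B, ¬ cs.IsReduced ω →
    ∃ ω', Relation.ReflTransGen (TitsMove M) ω ω' ∧ ω'.length + 2 = ω.length ∧ π ω' = π ω := by
  intro ω
  induction ω with
  | nil =>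
      intro h
      exact absurd (by simp [CoxeterSystem.IsReduced] : cs.IsReduced ([] : List B)) h
  | cons a ω₁ ih =>
      intro h
      by_cases h1 : cs.IsReduced ω₁
      · have hle : ℓ (π (a :: ω₁)) ≤ ω₁.length + 1 := by
          have := cs.length_wordProd_le (a :: ω₁)
          simpa using this
        have hlt : ℓ (π (a :: ω₁)) < ω₁.length + 1 := by
          rcases lt_or_eq_of_le hle with h' | h'
          · exact h'
          · exact absurd (show cs.IsReduced (a :: ω₁) by show ℓ _ = _; simpa using h') h
        have hl1 : ℓ (π ω₁) = ω₁.length := h1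
        have hπc : π (a :: ω₁) = s a * π ω₁ := cs.wordProd_cons a ω₁
        have hdesc : cs.IsLeftDescent (π ω₁) a := by
          unfold CoxeterSystem.IsLeftDescent
          rcases cs.length_simple_mul (π ω₁) a with h' | h'
          · exfalso
            have h'' : ℓ (π (a :: ω₁)) = ℓ (π ω₁) + 1 := by rw [hπc]; exact h'
            omega
          · omega
        obtain ⟨τ, hτred, hτ⟩ := cs.exists_reduced_word' (s a * π ω₁)
        have hlenτ : τ.length = ω₁.length - 1 := by
          have e1 : ℓ (s a * π ω₁) = τ.length := by rw [hτ]; exact hτred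
          have e2 := cs.isLeftDescent_iff.mp hdesc
          omega
        have hω₁pos : 0 < ω₁.length := by
          by_contra hc
          push_neg at hc
          interval_cases h₀ : ω₁.length
          rw [List.length_eq_zero_iff] at h₀
          subst h₀
          unfold CoxeterSystem.IsLeftDescent at hdesc
          simp at hdesc
        have hπaτ : π (a :: τ) = π ω₁ := by
          rw [cs.wordProd_cons, ← hτ, cs.simple_mul_simple_cancel_left]
        have hredaτ : cs.IsReduced (a :: τ) := by
          show ℓ _ = _
          rw [hπaτ, hl1]
          simp [hlenτ]
          omega
        have hmats := matsumoto cs ω₁.length ω₁ (a :: τ) rfl h1 hredaτ hπaτ.symm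
        have hchain1 : Relation.ReflTransGen (TitsMove M) (a :: ω₁) (a :: a :: τ) :=
          Relation.ReflTransGen.lift (fun l => a :: l)
            (fun u v huv => titsMove_cons a (braidMove_tits huv)) _ _ hmats
        have hdel : TitsMove M (a :: a :: τ) τ := Or.inl ⟨[], τ, a, by simp, by simp⟩
        refine ⟨τ, hchain1.trans (Relation.ReflTransGen.single hdel), by simp [hlenτ]; omega, ?_⟩
        rw [← hτ, cs.wordProd_cons]
      · obtain ⟨ω', hc, hl, hp⟩ := ih h1
        refine ⟨a :: ω',
          Relation.ReflTransGen.lift (fun l => a :: l) (fun u v huv => titsMove_cons a huv) _ _ hc,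
          by simp; omega, by rw [cs.wordProd_cons, cs.wordProd_cons, hp]⟩

/-! ### Main theorem -/

theorem tits_main : ∀ (n : ℕ) (ω ω' : List B), ω.length = n → cs.IsReduced ω' →
    π ω = π ω' → Relation.ReflTransGen (TitsMove M) ω ω' := by
  intro n
  induction n using Nat.strong_induction_on with
  | _ n IH =>
    intro ω ω' hlen hred hprod
    by_cases hr : cs.IsReduced ω
    · exact Relation.ReflTransGen.mono (fun u v huv => braidMove_tits huv) _ _
        (matsumoto cs ω.length ω ω' rfl hr hred hprod)
    · obtain ⟨ω'', hc, hl, hp⟩ := reduce_nonreduced cs ω hr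
      have hrec := IH ω''.length (by omega) ω'' ω' rfl hred (by rw [hp, hprod])
      exact hc.trans hrec


end parity

end TitsAux

/-- Tits' solution to the word problem: any word in the simple generators can be transformed into
any reduced word representing the same group element by a finite sequence of Tits moves. -/
theorem tits_word_problem {B W : Type*} [Group W] (M : CoxeterMatrix B)
    (cs : CoxeterSystem M W) (ω ω' : List B) (hred : cs.IsReduced ω')
    (hprod : cs.wordProd ω = cs.wordProd ω') :
    Relation.ReflTransGen (TitsMove M) ω ω' := by
  exact TitsAux.tits_main cs ω.length ω ω' rfl hred hprod
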